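/- With the polydisk realization setup as above, if λ ∈ D^d is a diagonal eigenvalue of D* (i.e., D* v = Δ(λ) v for some nonzero v ∈ H), then f(λ) = 0. Hence the zero set of f in D^d equals { λ ∈ D^d : λ is a diagonal eigenvalue of D* }. -/

import Mathlib

open ContinuousLinearMap

set_option maxHeartbeats 2000000 in
/-- Polydisk realization: the zero set of `f` in `𝔻^d` equals the set of diagonal
eigenvalues of `D*` in `𝔻^d`. -/
theorem stmt7 {H : Type*} [NormedAddCommGroup H] [InnerProductSpace ℂ H] [CompleteSpace H]
    {d : ℕ} (P : Fin d → (H →L[ℂ] H))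
    (hPsa : ∀ j, IsSelfAdjoint (P j))
    (hPidem : ∀ j, P j ∘L P j = P j)
    (hPorth : ∀ i j, i ≠ j → P i ∘L P j = 0)
    (hPsum : ∑ j, P j = 1)
    (A : ℂ) (B : H →L[ℂ] ℂ) (C : ℂ →L[ℂ] H) (D : H →L[ℂ] H)
    -- V*V = I on ℂ ⊕ H
    (h1 : star A * A + adjoint C (C 1) = 1)
    (h2 : ∀ h : H, star A * B h + adjoint C (D h) = 0)
    (h3 : adjoint B A + adjoint D (C 1) = 0)
    (h4 : ∀ h : H, adjoint B (B h) + adjoint D (D h) = h)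
    -- V V* = I on ℂ ⊕ H
    (h5 : A * star A + B (adjoint B 1) = 1)
    (h6 : ∀ v : H, A * adjoint C v + B (adjoint D v) = 0)
    (h7 : C (star A) + D (adjoint B 1) = 0)
    (h8 : ∀ v : H, C (adjoint C v) + D (adjoint D v) = v)
    (f : (Fin d → ℂ) → ℂ)
    (hf : ∀ z : Fin d → ℂ,
      f z = A + B ((∑ j, z j • P j)
        (Ring.inverse (1 - D ∘L (∑ j, z j • P j)) (C 1))))
    :
    ∀ lam : Fin d → ℂ, (∀ j, ‖lam j‖ < 1) →
      (f lam = 0 ↔ ∃ v : H, v ≠ 0 ∧ adjoint D v = (∑ j, lam j • P j) v) := by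
  intro lam hlam
  set Δ : H →L[ℂ] H := ∑ j, lam j • P j with hΔdef
  -- moving projections across the inner product
  have hmove : ∀ (j : Fin d) (x y : H), (inner ℂ (P j x) y : ℂ) = inner ℂ x (P j y) := by
    intro j x y
    have h := (hPsa j).adjoint_eq
    conv_lhs => rw [← h]
    exact adjoint_inner_left _ _ _
  -- cross terms vanish
  have hcross : ∀ (i j : Fin d), i ≠ j → ∀ (x y : H),
      (inner ℂ (P i x) (P j y) : ℂ) = 0 := by
    intro i j hij x y
    rw [hmove]
    have : P i (P j y) = 0 := by
      have := hPorth i j hij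
      calc P i (P j y) = (P i ∘L P j) y := rfl
        _ = 0 := by rw [this]; rfl
    rw [this, inner_zero_right]
  -- diagonal terms
  have hdiag : ∀ (j : Fin d) (x y : H),
      (inner ℂ (P j x) (P j y) : ℂ) = inner ℂ x (P j y) := by
    intro j x y
    rw [hmove]
    congr 1
    calc P j (P j y) = (P j ∘L P j) y := rfl
      _ = P j y := by rw [hPidem]
  -- Parseval-type fact
  have hsum : ∀ x : H, ∑ j, ‖P j x‖ ^ 2 = ‖x‖ ^ 2 := by
    intro x
    have hx : x = ∑ j, P j x := by
      rw [← ContinuousLinearMap.sum_apply, hPsum]; rfl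
    have e : (inner ℂ x x : ℂ) = ∑ j, (inner ℂ (P j x) (P j x) : ℂ) := by
      nth_rewrite 2 [hx]
      rw [inner_sum]
      exact Finset.sum_congr rfl fun j _ => (hdiag j x x).symm
    rw [← inner_self_eq_norm_sq (𝕜 := ℂ) x, e, map_sum]
    exact Finset.sum_congr rfl fun j _ => (inner_self_eq_norm_sq (P j x)).symm
  -- norm of Δ x
  have hnormΔ : ∀ x : H, ‖Δ x‖ ^ 2 = ∑ j, ‖lam j‖ ^ 2 * ‖P j x‖ ^ 2 := by
    intro x
    have hx : Δ x = ∑ j, lam j • P j x := by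
      rw [hΔdef, ContinuousLinearMap.sum_apply]
      exact Finset.sum_congr rfl fun j _ => rfl
    have keyC : (inner ℂ (Δ x) (Δ x) : ℂ)
        = ((∑ j, ‖lam j‖ ^ 2 * ‖P j x‖ ^ 2 : ℝ) : ℂ) := by
      rw [hx, sum_inner]
      push_cast
      refine Finset.sum_congr rfl fun i _ => ?_
      rw [inner_sum, Finset.sum_eq_single i]
      · rw [inner_smul_left, inner_smul_right, inner_self_eq_norm_sq_to_K,
          ← mul_assoc, RCLike.conj_mul]
        norm_cast
      · intro j _ hji
        rw [inner_smul_left, inner_smul_right, hcross i j (Ne.symm hji) x x]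
        ring
      · intro hi; exact absurd (Finset.mem_univ i) hi
    rw [← inner_self_eq_norm_sq (𝕜 := ℂ) (Δ x), keyC]
    simp [RCLike.re_to_complex, ← Complex.ofReal_pow]
  -- strict contraction
  have hstrict : ∀ v : H, v ≠ 0 → ‖Δ v‖ < ‖v‖ := by
    intro v hv
    have hv2 : 0 < ‖v‖ ^ 2 := by
      have := norm_pos_iff.mpr hv
      positivity
    have hex : ∃ j0 : Fin d, 0 < ‖P j0 v‖ ^ 2 := by
      by_contra hc
      push_neg at hc
      have : ∑ j, ‖P j v‖ ^ 2 ≤ 0 := Finset.sum_nonpos fun j _ => hc j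
      rw [hsum v] at this
      linarith
    obtain ⟨j0, hj0⟩ := hex
    have hlt : ‖Δ v‖ ^ 2 < ‖v‖ ^ 2 := by
      rw [hnormΔ v, ← hsum v]
      refine Finset.sum_lt_sum (fun j _ => ?_) ⟨j0, Finset.mem_univ j0, ?_⟩
      · have h1 : ‖lam j‖ ^ 2 ≤ 1 := by
          have := (hlam j).le
          nlinarith [norm_nonneg (lam j)]
        nlinarith [sq_nonneg ‖P j v‖]
      · have h1 : ‖lam j0‖ ^ 2 < 1 := by
          nlinarith [norm_nonneg (lam j0), hlam j0]
        nlinarith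
    exact lt_of_pow_lt_pow_left₀ 2 (norm_nonneg v) hlt
  -- D is a contraction
  have hDle : ∀ y : H, ‖D y‖ ≤ ‖y‖ := by
    intro y
    have e : (inner ℂ y y : ℂ) = inner ℂ (B y) (B y) + inner ℂ (D y) (D y) := by
      nth_rewrite 2 [← h4 y]
      rw [inner_add_right, adjoint_inner_right, adjoint_inner_right]
    have er : ‖y‖ ^ 2 = ‖B y‖ ^ 2 + ‖D y‖ ^ 2 := by
      rw [← inner_self_eq_norm_sq (𝕜 := ℂ) y, e, map_add]
      rw [inner_self_eq_norm_sq, inner_self_eq_norm_sq]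
    have : ‖D y‖ ^ 2 ≤ ‖y‖ ^ 2 := by nlinarith [sq_nonneg ‖B y‖]
    exact le_of_pow_le_pow_left₀ two_ne_zero (norm_nonneg y) this
  -- the operator norm bound for Δ
  set r : ℝ := ((Finset.univ.sup fun j => ‖lam j‖₊ : NNReal) : ℝ) with hrdef
  have hr0 : 0 ≤ r := NNReal.coe_nonneg _
  have hr1 : r < 1 := by
    rw [hrdef]
    have : (Finset.univ.sup fun j => ‖lam j‖₊ : NNReal) < 1 := by
      rw [Finset.sup_lt_iff (by norm_num : (⊥ : NNReal) < 1)]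
      intro j _
      exact_mod_cast hlam j
    exact_mod_cast this
  have hrj : ∀ j, ‖lam j‖ ≤ r := by
    intro j
    have : ‖lam j‖₊ ≤ Finset.univ.sup fun j => ‖lam j‖₊ :=
      Finset.le_sup (f := fun j => ‖lam j‖₊) (Finset.mem_univ j)
    exact_mod_cast this
  have hΔle : ∀ x : H, ‖Δ x‖ ≤ r * ‖x‖ := by
    intro x
    have h2 : ‖Δ x‖ ^ 2 ≤ (r * ‖x‖) ^ 2 := by
      rw [hnormΔ x, mul_pow, ← hsum x, Finset.mul_sum]
      refine Finset.sum_le_sum fun j _ => ?_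
      exact mul_le_mul_of_nonneg_right
        (by nlinarith [norm_nonneg (lam j), hrj j]) (sq_nonneg _)
    exact le_of_pow_le_pow_left₀ two_ne_zero (by positivity) h2
  -- 1 - D ∘L Δ is a unit
  have hunit : IsUnit (1 - D ∘L Δ) := by
    refine isUnit_one_sub_of_norm_lt_one ?_
    have hb : ‖D ∘L Δ‖ ≤ r := by
      refine ContinuousLinearMap.opNorm_le_bound _ hr0 fun x => ?_
      calc ‖(D ∘L Δ) x‖ = ‖D (Δ x)‖ := rfl
        _ ≤ ‖Δ x‖ := hDle _
        _ ≤ r * ‖x‖ := hΔle x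
    exact lt_of_le_of_lt hb hr1
  obtain ⟨w, hwdef⟩ : ∃ w : H, w = Ring.inverse (1 - D ∘L Δ) (C 1) := ⟨_, rfl⟩
  have hw : w - D (Δ w) = C 1 := by
    have e := Ring.mul_inverse_cancel _ hunit
    have e2 : ((1 - D ∘L Δ) * Ring.inverse (1 - D ∘L Δ)) (C 1) = C 1 := by
      rw [e, ContinuousLinearMap.one_apply]
    rw [ContinuousLinearMap.mul_apply] at e2
    calc w - D (Δ w) = (1 - D ∘L Δ) w := by
          rw [ContinuousLinearMap.sub_apply, ContinuousLinearMap.one_apply,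
            ContinuousLinearMap.comp_apply]
      _ = C 1 := by rw [hwdef]; exact e2
  have hw' : w = C 1 + D (Δ w) := by
    rw [← hw]; abel
  have hfw : f lam = A + B (Δ w) := by rw [hf lam, ← hΔdef, ← hwdef]
  constructor
  · -- f lam = 0 → eigen
    intro hf0
    rw [hfw] at hf0
    have hCw : adjoint C w = 1 := by
      have e1 : adjoint C (C 1) = 1 - star A * A := by linear_combination h1
      have e2 : adjoint C (D (Δ w)) = -(star A * B (Δ w)) := by
        linear_combination h2 (Δ w)
      rw [hw', map_add, e1, e2]
      linear_combination (-(star A)) * hf0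
    have hDw : adjoint D w = Δ w := by
      have e1 : adjoint D (C 1) = -(adjoint B A) :=
        eq_neg_of_add_eq_zero_right h3
      have e2 : adjoint D (D (Δ w)) = Δ w - adjoint B (B (Δ w)) :=
        eq_sub_of_add_eq' (h4 (Δ w))
      have e3 : adjoint B A + adjoint B (B (Δ w)) = 0 := by
        rw [← map_add]
        have : A + B (Δ w) = 0 := hf0
        rw [this, map_zero]
      calc adjoint D w = adjoint D (C 1) + adjoint D (D (Δ w)) := by
            conv_lhs => rw [hw']
            rw [map_add]
        _ = -(adjoint B A) + (Δ w - adjoint B (B (Δ w))) := by rw [e1, e2]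
        _ = Δ w - (adjoint B A + adjoint B (B (Δ w))) := by abel
        _ = Δ w := by rw [e3, sub_zero]
    refine ⟨w, ?_, hDw⟩
    intro hw0
    rw [hw0, map_zero] at hCw
    exact one_ne_zero hCw.symm
  · -- eigen → f lam = 0
    rintro ⟨v, hv0, hv⟩
    set u : ℂ := adjoint C v with hudef
    have hCu : C u = u • C 1 := by rw [← map_smul, smul_eq_mul, mul_one]
    have h8v : u • C 1 + D (Δ v) = v := by
      have h := h8 v
      rw [hv, ← hudef, hCu] at h
      exact h
    have hu0 : u ≠ 0 := by
      intro hu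
      rw [hu, zero_smul, zero_add] at h8v
      have hlt : ‖v‖ < ‖v‖ :=
        calc ‖v‖ = ‖D (Δ v)‖ := by rw [h8v]
          _ ≤ ‖Δ v‖ := hDle _
          _ < ‖v‖ := hstrict v hv0
      exact lt_irrefl _ hlt
    have heq : (1 - D ∘L Δ) (u⁻¹ • v) = C 1 := by
      rw [ContinuousLinearMap.sub_apply, ContinuousLinearMap.one_apply,
        ContinuousLinearMap.comp_apply, map_smul, map_smul, ← smul_sub]
      have hvd : v - D (Δ v) = u • C 1 := (eq_sub_of_add_eq h8v).symm
      rw [hvd, smul_smul, inv_mul_cancel₀ hu0, one_smul]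
    have hwv : w = u⁻¹ • v := by
      have e := Ring.inverse_mul_cancel _ hunit
      calc w = Ring.inverse (1 - D ∘L Δ) ((1 - D ∘L Δ) (u⁻¹ • v)) := by
            rw [heq, ← hwdef]
        _ = (Ring.inverse (1 - D ∘L Δ) * (1 - D ∘L Δ)) (u⁻¹ • v) :=
            (ContinuousLinearMap.mul_apply _ _ _).symm
        _ = u⁻¹ • v := by rw [e, ContinuousLinearMap.one_apply]
    have hBv : B (Δ v) = -(A * u) := by
      have := h6 v
      rw [hv, ← hudef] at this
      linear_combination this
    rw [hfw, hwv, map_smul, map_smul, smul_eq_mul, hBv]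
    field_simp
    ring
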